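/- Let K ⊂ ℝⁿ be a strictly convex, smooth, compact set with 0 in its interior, F_K(x) = −ln(1 − ‖x‖_K) − ‖x‖_K, and let x ∈ K with ‖x‖_K < 1, v = ∇F_K(x), and u ∈ ℝⁿ \ {0}. If Θ = (‖u‖_{K°} − ‖v‖_{K°})/(1 + ‖v‖_{K°}) ≥ −1/2, then D_{F_K*}(u, v) ≤ (1 − ‖x‖_K)²‖u − v‖²_{K°} + (1 − ‖x‖_K)·D_{½‖·‖²_{K°}}(u, v). -/

import Mathlib

open scoped InnerProductSpace
open scoped Pointwise
open MeasureTheory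

noncomputable section

abbrev Euc (n : ℕ) := EuclideanSpace ℝ (Fin n)

/-- The polar set `K° = {d | ⟪d, x⟫ ≤ 1 for all x ∈ K}`. -/
def polarSet {n : ℕ} (K : Set (Euc n)) : Set (Euc n) := {d | ∀ x ∈ K, ⟪d, x⟫_ℝ ≤ 1}

/-- The normal cone of `K` at `y`. -/
def normalCone {n : ℕ} (K : Set (Euc n)) (y : Euc n) : Set (Euc n) :=
  {d | ∀ x ∈ K, 0 ≤ ⟪d, y - x⟫_ℝ}

/-- A set is smooth if at each boundary point there is exactly one normal direction in `∂K°`. -/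
def SmoothSet {n : ℕ} (K : Set (Euc n)) : Prop :=
  ∀ x ∈ frontier K, ∃! d, d ∈ normalCone K x ∩ frontier (polarSet K)

/-- A set is strictly convex if the midpoint of two distinct boundary points is interior. -/
def StrictlyConvexSet {n : ℕ} (K : Set (Euc n)) : Prop :=
  ∀ x₁ ∈ frontier K, ∀ x₂ ∈ frontier K, x₁ ≠ x₂ → midpoint ℝ x₁ x₂ ∈ interior K

/-- `(α, q)`-uniform convexity of a set w.r.t. its gauge. -/
def UniformlyConvexSet {n : ℕ} (K : Set (Euc n)) (α q : ℝ) : Prop :=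
  ∀ x ∈ K, ∀ y ∈ K, ∀ z ∈ K, ∀ γ ∈ Set.Icc (0:ℝ) 1,
    γ • x + (1 - γ) • y + (α / q * (γ * (1 - γ)) * gauge K (x - y) ^ q) • z ∈ K

/-- The barrier function `F_K(x) = -ln(1 - ‖x‖_K) - ‖x‖_K`. -/
def FK {n : ℕ} (K : Set (Euc n)) (x : Euc n) : ℝ := -Real.log (1 - gauge K x) - gauge K x

/-- Fenchel conjugate of the barrier `F_K` (defined on `D_K = {‖x‖_K < 1}`). -/
def FstarK {n : ℕ} (K : Set (Euc n)) (d : Euc n) : ℝ :=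
  sSup ((fun x => ⟪x, d⟫_ℝ - FK K x) '' {x | gauge K x < 1})

/-- Bregman divergence `D_F(u, v) = F(u) - F(v) - ⟪∇F(v), u - v⟫`. -/
def breg {n : ℕ} (F : Euc n → ℝ) (u v : Euc n) : ℝ :=
  F u - F v - ⟪gradient F v, u - v⟫_ℝ

def l1Ball {n : ℕ} (r : ℝ) : Set (Euc n) := {x | ∑ i, |x i| ≤ r}
def linfBall {n : ℕ} (R : ℝ) : Set (Euc n) := {x | ∀ i, |x i| ≤ R}
def l2Ball {n : ℕ} (r : ℝ) : Set (Euc n) := Metric.closedBall 0 r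
def lqBall {n : ℕ} (q r : ℝ) : Set (Euc n) := {x | ∑ i, |x i| ^ q ≤ r ^ q}

open Topology

namespace BregAux
/-- `ln y ≥ (y-1) - (y-1)²/2` for `y ≥ 1`. -/
lemma log_claimA {y : ℝ} (hy : 1 ≤ y) : (y - 1) - (y - 1) ^ 2 / 2 ≤ Real.log y := by
  have h0 : ∀ z ∈ Set.Ici (1:ℝ), HasDerivAt (fun z => Real.log z - (z - 1) + (z - 1) ^ 2 / 2)
      (z⁻¹ - 1 + (z - 1)) z := by
    intro z hz
    have hz1 : (1:ℝ) ≤ z := hz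
    have hz0 : z ≠ 0 := by linarith
    have h1 : HasDerivAt Real.log z⁻¹ z := Real.hasDerivAt_log hz0
    have h2 : HasDerivAt (fun z : ℝ => z - 1) 1 z := (hasDerivAt_id z).sub_const 1
    have h3 : HasDerivAt (fun z : ℝ => (z - 1) ^ 2 / 2) (z - 1) z := by
      have := (h2.pow 2).div_const 2
      refine this.congr_deriv ?_
      · ring
    exact (h1.fun_sub h2).fun_add h3
  have hmono : MonotoneOn (fun z => Real.log z - (z - 1) + (z - 1) ^ 2 / 2) (Set.Ici (1:ℝ)) := by
    apply monotoneOn_of_deriv_nonneg (convex_Ici 1)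
    · intro z hz
      exact ((h0 z hz).continuousAt).continuousWithinAt
    · intro z hz
      rw [interior_Ici] at hz
      exact ((h0 z (le_of_lt (Set.mem_Ioi.mp hz))).differentiableAt).differentiableWithinAt
    · intro z hz
      rw [interior_Ici] at hz
      have hz1 : (1:ℝ) < z := Set.mem_Ioi.mp hz
      rw [(h0 z hz1.le).deriv]
      have hz0 : (0:ℝ) < z := by linarith
      have h4 : z⁻¹ + z - 2 = (z - 1) ^ 2 / z := by field_simp; ring
      nlinarith [sq_nonneg (z - 1), div_nonneg (sq_nonneg (z - 1)) hz0.le]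
  have := hmono (Set.mem_Ici.mpr le_rfl) (Set.mem_Ici.mpr hy) hy
  simp only [Real.log_one] at this
  linarith

/-- `ln y ≥ (y²-1)/(2y)` for `0 < y ≤ 1`. -/
lemma log_claimB {y : ℝ} (hy0 : 0 < y) (hy : y ≤ 1) : (y ^ 2 - 1) / (2 * y) ≤ Real.log y := by
  have h0 : ∀ z ∈ Set.Ioi (0:ℝ), HasDerivAt (fun z => Real.log z - (z ^ 2 - 1) / (2 * z))
      (z⁻¹ - (1 / 2 + 1 / (2 * z ^ 2))) z := by
    intro z hz
    have hz0 : (0:ℝ) < z := hz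
    have h1 : HasDerivAt Real.log z⁻¹ z := Real.hasDerivAt_log hz0.ne'
    have h2 : HasDerivAt (fun z : ℝ => (z ^ 2 - 1) / (2 * z)) (1 / 2 + 1 / (2 * z ^ 2)) z := by
      have hnum : HasDerivAt (fun z : ℝ => z ^ 2 - 1) (2 * z) z := by
        simpa using ((hasDerivAt_id z).pow 2).sub_const 1
      have hden : HasDerivAt (fun z : ℝ => 2 * z) 2 z := by
        simpa using (hasDerivAt_id z).const_mul 2
      have := hnum.div hden (by positivity)
      refine this.congr_deriv ?_
      field_simp
      ring
    exact h1.sub h2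
  have hanti : AntitoneOn (fun z => Real.log z - (z ^ 2 - 1) / (2 * z)) (Set.Ioc (0:ℝ) 1) := by
    apply antitoneOn_of_deriv_nonpos (convex_Ioc 0 1)
    · intro z hz
      exact ((h0 z (Set.mem_Ioi.mpr hz.1)).continuousAt).continuousWithinAt
    · intro z hz
      rw [interior_Ioc] at hz
      exact ((h0 z (Set.mem_Ioi.mpr hz.1)).differentiableAt).differentiableWithinAt
    · intro z hz
      rw [interior_Ioc] at hz
      rw [(h0 z (Set.mem_Ioi.mpr hz.1)).deriv]
      have hz0 : (0:ℝ) < z := hz.1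
      have h4 : z⁻¹ - (1 / 2 + 1 / (2 * z ^ 2)) = -((z - 1) ^ 2 / (2 * z ^ 2)) := by
        field_simp; ring
      rw [h4]
      have : (0:ℝ) ≤ (z - 1) ^ 2 / (2 * z ^ 2) := by positivity
      linarith
  have := hanti (Set.mem_Ioc.mpr ⟨hy0, hy⟩) (Set.mem_Ioc.mpr ⟨one_pos, le_rfl⟩) hy
  norm_num at this
  linarith

/-- Key scalar inequality: `g(r) - g(s) ≤ (r²-s²)/(2(1+s))` for `r, s ≥ 0`. -/
lemma key_scalar {r s : ℝ} (hr : 0 ≤ r) (hs : 0 ≤ s) :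
    (r - Real.log (1 + r)) - (s - Real.log (1 + s)) ≤ (r ^ 2 - s ^ 2) / (2 * (1 + s)) := by
  have hr1 : (0:ℝ) < 1 + r := by linarith
  have hs1 : (0:ℝ) < 1 + s := by linarith
  have hlog : Real.log (1 + r) - Real.log (1 + s) = Real.log ((1 + r) / (1 + s)) :=
    (Real.log_div hr1.ne' hs1.ne').symm
  set y := (1 + r) / (1 + s) with hy
  have hy0 : 0 < y := by positivity
  rcases le_total s r with hsr | hrs
  · have hy1 : 1 ≤ y := by rw [hy, le_div_iff₀ hs1]; linarith
    have hA : (y - 1) - (y - 1) ^ 2 / 2 ≤ Real.log (1 + r) - Real.log (1 + s) := by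
      rw [hlog]; exact log_claimA hy1
    have hident : (r ^ 2 - s ^ 2) / (2 * (1 + s)) - ((r - s) - ((y - 1) - (y - 1) ^ 2 / 2))
        = (r - s) ^ 2 * s / (2 * (1 + s) ^ 2) := by
      rw [hy]; field_simp; ring
    have hpos : (0:ℝ) ≤ (r - s) ^ 2 * s / (2 * (1 + s) ^ 2) := by positivity
    linarith
  · have hy1 : y ≤ 1 := by rw [hy, div_le_one hs1]; linarith
    have hB : (y ^ 2 - 1) / (2 * y) ≤ Real.log (1 + r) - Real.log (1 + s) := by
      rw [hlog]; exact log_claimB hy0 hy1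
    have hident : (r ^ 2 - s ^ 2) / (2 * (1 + s)) - ((r - s) - (y ^ 2 - 1) / (2 * y))
        = r * (s - r) ^ 2 / (2 * (1 + s) * (1 + r)) := by
      rw [hy]; field_simp; ring
    have hpos : (0:ℝ) ≤ r * (s - r) ^ 2 / (2 * (1 + s) * (1 + r)) := by positivity
    linarith


/-- A "support function" (pointwise max of linear functionals over a compact set) is
differentiable at a point where the maximizer is unique. -/
lemma support_hasGradientAt {n : ℕ} {C : Set (Euc n)} (hC : IsCompact C)
    {M : Euc n → ℝ}
    (hub : ∀ z : Euc n, ∀ y ∈ C, ⟪y, z⟫_ℝ ≤ M z)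
    (hatt : ∀ z : Euc n, ∃ y ∈ C, ⟪y, z⟫_ℝ = M z)
    {x w : Euc n} (hwx : ⟪w, x⟫_ℝ = M x)
    (huniq : ∀ y ∈ C, ⟪y, x⟫_ℝ = M x → y = w) :
    HasGradientAt M w x := by
  obtain ⟨B, hB0, hBbd⟩ : ∃ B : ℝ, 0 < B ∧ ∀ y ∈ C, ‖y‖ ≤ B := by
    obtain ⟨B, hB⟩ := hC.isBounded.subset_closedBall 0
    exact ⟨max B 1, lt_of_lt_of_le one_pos (le_max_right _ _), fun y hy => by
      have := hB hy
      rw [Metric.mem_closedBall, dist_zero_right] at this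
      exact this.trans (le_max_left _ _)⟩
  rw [hasGradientAt_iff_isLittleO, Asymptotics.isLittleO_iff]
  intro c hc
  -- Claim: maximizers at nearby points are within `c` of `w`.
  have claim : ∃ δ : ℝ, 0 < δ ∧ ∀ x' : Euc n, ‖x' - x‖ < δ →
      ∀ y ∈ C, ⟪y, x'⟫_ℝ = M x' → ‖y - w‖ ≤ c := by
    set A := {y ∈ C | c ≤ ‖y - w‖} with hA
    have hAcl : IsClosed A :=
      (hC.isClosed.inter (isClosed_le continuous_const (continuous_id.sub continuous_const).norm))
    have hAcomp : IsCompact A := hC.of_isClosed_subset hAcl (Set.sep_subset _ _)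
    by_cases hAne : A.Nonempty
    · have hcont : ContinuousOn (fun y : Euc n => ⟪y, x⟫_ℝ) A :=
        (continuous_id.inner (continuous_const : Continuous fun _ : Euc n => x)).continuousOn
      obtain ⟨y₀, hy₀A, hy₀max⟩ := hAcomp.exists_isMaxOn hAne hcont
      set m := ⟪y₀, x⟫_ℝ with hm
      have hwC : w ∈ C := by
        obtain ⟨yw, hywC, hywx⟩ := hatt x
        have := huniq yw hywC hywx; subst this; exact hywC
      have hmlt : m < M x := by
        rcases lt_or_eq_of_le (hub x y₀ hy₀A.1) with h | h
        · exact h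
        · exfalso
          have hy₀w : y₀ = w := huniq y₀ hy₀A.1 h
          have : c ≤ ‖y₀ - w‖ := hy₀A.2
          rw [hy₀w, sub_self, norm_zero] at this
          linarith
      refine ⟨(M x - m) / (3 * B), div_pos (by linarith) (by positivity), fun x' hx' y hyC hyx' => ?_⟩
      by_contra hcon
      push_neg at hcon
      have hyA : y ∈ A := ⟨hyC, hcon.le⟩
      have h1 : ⟪y, x⟫_ℝ ≤ m := hy₀max hyA
      have hyB : ‖y‖ ≤ B := hBbd y hyC
      have hwB : ‖w‖ ≤ B := hBbd w hwC
      have e1 : |⟪y, x' - x⟫_ℝ| ≤ B * ‖x' - x‖ :=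
        (abs_real_inner_le_norm y (x' - x)).trans
          (mul_le_mul_of_nonneg_right hyB (norm_nonneg _))
      have e2 : |⟪w, x' - x⟫_ℝ| ≤ B * ‖x' - x‖ :=
        (abs_real_inner_le_norm w (x' - x)).trans
          (mul_le_mul_of_nonneg_right hwB (norm_nonneg _))
      have h4 : ⟪w, x'⟫_ℝ = M x + ⟪w, x' - x⟫_ℝ := by
        rw [← hwx, ← inner_add_right]
        norm_num
      have e3 : M x - B * ‖x' - x‖ ≤ M x' := by
        have h5 : ⟪w, x'⟫_ℝ ≤ M x' := hub x' w hwC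
        have := neg_abs_le ⟪w, x' - x⟫_ℝ
        linarith
      have h6 : ⟪y, x⟫_ℝ = ⟪y, x'⟫_ℝ - ⟪y, x' - x⟫_ℝ := by
        rw [inner_sub_right]; ring
      have h8 : M x - 2 * B * ‖x' - x‖ ≤ ⟪y, x⟫_ℝ := by
        rw [h6, hyx']
        have := le_abs_self ⟪y, x' - x⟫_ℝ
        linarith
      have h9 : 2 * B * ‖x' - x‖ < 2 * B * ((M x - m) / (3 * B)) :=
        mul_lt_mul_of_pos_left hx' (by positivity)
      have h10 : 2 * B * ((M x - m) / (3 * B)) = 2 * (M x - m) / 3 := by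
        field_simp
      rw [h10] at h9
      linarith
    · refine ⟨1, one_pos, fun x' _ y hyC _ => ?_⟩
      by_contra hcon
      push_neg at hcon
      exact hAne ⟨y, hyC, hcon.le⟩
  obtain ⟨δ, hδ0, hδ⟩ := claim
  filter_upwards [Metric.ball_mem_nhds x hδ0] with x' hx'
  have hdist : ‖x' - x‖ < δ := by
    rw [← dist_eq_norm]
    exact Metric.mem_ball.mp hx'
  obtain ⟨y, hyC, hyx'⟩ := hatt x'
  have hclose : ‖y - w‖ ≤ c := hδ x' hdist y hyC hyx'
  have hlow : 0 ≤ M x' - M x - ⟪w, x' - x⟫_ℝ := by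
    have h4 : ⟪w, x'⟫_ℝ = ⟪w, x⟫_ℝ + ⟪w, x' - x⟫_ℝ := by
      rw [← inner_add_right]; norm_num
    obtain ⟨yw, hywC, hywx⟩ := hatt x
    have hwC : w ∈ C := by have := huniq yw hywC hywx; subst this; exact hywC
    have h5 : ⟪w, x'⟫_ℝ ≤ M x' := hub x' w hwC
    rw [hwx] at h4
    linarith
  have hhigh : M x' - M x - ⟪w, x' - x⟫_ℝ ≤ ⟪y - w, x' - x⟫_ℝ := by
    have h6 : ⟪y, x⟫_ℝ ≤ M x := hub x y hyC
    have h7 : ⟪y - w, x' - x⟫_ℝ = (⟪y, x'⟫_ℝ - ⟪y, x⟫_ℝ) - ⟪w, x' - x⟫_ℝ := by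
      rw [inner_sub_left, inner_sub_right]
    rw [h7, hyx']
    linarith
  have hq : ⟪y - w, x' - x⟫_ℝ ≤ c * ‖x' - x‖ := by
    refine (real_inner_le_norm _ _).trans ?_
    exact mul_le_mul_of_nonneg_right hclose (norm_nonneg _)
  rw [Real.norm_eq_abs, abs_le]
  constructor
  · have : 0 ≤ c * ‖x' - x‖ := by positivity
    linarith
  · linarith

section Polar

variable {n : ℕ} {K : Set (Euc n)}

lemma hPconv : Convex ℝ (polarSet K) := by
  intro d₁ h₁ d₂ h₂ a b ha hb hab
  intro y hy
  have := h₁ y hy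
  have := h₂ y hy
  have e1 : ⟪a • d₁ + b • d₂, y⟫_ℝ = a * ⟪d₁, y⟫_ℝ + b * ⟪d₂, y⟫_ℝ := by
    rw [inner_add_left, real_inner_smul_left, real_inner_smul_left]
  rw [e1]
  nlinarith [h₁ y hy, h₂ y hy]

lemma hPclosed : IsClosed (polarSet K) := by
  have : polarSet K = ⋂ y ∈ K, {d : Euc n | ⟪d, y⟫_ℝ ≤ 1} := by
    ext d; simp [polarSet]
  rw [this]
  exact isClosed_biInter fun y _ =>
    isClosed_le (continuous_id.inner continuous_const) continuous_const

lemma zero_mem_polar : (0 : Euc n) ∈ polarSet K := by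
  intro y hy
  rw [inner_zero_left]
  norm_num

/-- If `K` is bounded by `R`, the polar contains the ball of radius `R⁻¹`. -/
lemma ball_subset_polar {R : ℝ} (hR : 0 < R) (hKR : ∀ y ∈ K, ‖y‖ ≤ R) :
    Metric.ball (0 : Euc n) R⁻¹ ⊆ polarSet K := by
  intro d hd y hy
  rw [Metric.mem_ball, dist_zero_right] at hd
  calc ⟪d, y⟫_ℝ ≤ ‖d‖ * ‖y‖ := real_inner_le_norm d y
    _ ≤ R⁻¹ * R := by
        apply mul_le_mul hd.le (hKR y hy) (norm_nonneg _) (by positivity)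
    _ = 1 := by field_simp

lemma polar_mem_nhds {R : ℝ} (hR : 0 < R) (hKR : ∀ y ∈ K, ‖y‖ ≤ R) :
    polarSet K ∈ 𝓝 (0 : Euc n) :=
  Filter.mem_of_superset (Metric.ball_mem_nhds 0 (by positivity)) (ball_subset_polar hR hKR)

lemma polar_bounded {ε : ℝ} (hε : 0 < ε) (hball : Metric.ball (0:Euc n) ε ⊆ K) :
    ∀ d ∈ polarSet K, ‖d‖ ≤ 2 / ε := by
  intro d hd
  rcases eq_or_ne d 0 with rfl | hd0
  · rw [norm_zero]; positivity
  · have hmem : (ε / 2) • ‖d‖⁻¹ • d ∈ K := by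
      apply hball
      rw [Metric.mem_ball, dist_zero_right, norm_smul, norm_smul, norm_inv, norm_norm,
        Real.norm_eq_abs, abs_of_pos (by positivity : (0:ℝ) < ε / 2)]
      rw [inv_mul_cancel₀ (norm_ne_zero_iff.mpr hd0), mul_one]
      linarith
    have := hd _ hmem
    rw [real_inner_smul_right, real_inner_smul_right, real_inner_self_eq_norm_sq] at this
    have hnd : 0 < ‖d‖ := norm_pos_iff.mpr hd0
    have h2 : ‖d‖⁻¹ * ‖d‖ ^ 2 = ‖d‖ := by
      field_simp [pow_two]
    rw [h2] at this
    rw [le_div_iff₀ hε]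
    nlinarith

/-- Every element of `K` gives a lower bound for the polar gauge. -/
lemma inner_le_gauge_polar {R : ℝ} (hR : 0 < R) (hKR : ∀ y ∈ K, ‖y‖ ≤ R)
    (d : Euc n) (y : Euc n) (hy : y ∈ K) : ⟪y, d⟫_ℝ ≤ gauge (polarSet K) d := by
  have habs : Absorbent ℝ (polarSet K) := absorbent_nhds_zero (polar_mem_nhds hR hKR)
  apply le_of_forall_gt_imp_ge_of_dense
  intro μ hμ
  obtain ⟨b, hb0, hbμ, hdb⟩ := exists_lt_of_gauge_lt habs hμ
  obtain ⟨e, heP, hede⟩ := Set.mem_smul_set.mp hdb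
  rw [← hede, real_inner_smul_right]
  have h1 : ⟪y, e⟫_ℝ ≤ 1 := by
    rw [real_inner_comm]
    exact heP y hy
  nlinarith


lemma zero_mem_K {ε : ℝ} (hε : 0 < ε) (hball : Metric.ball (0:Euc n) ε ⊆ K) :
    (0 : Euc n) ∈ K :=
  hball (by simp [Metric.mem_ball, hε])

lemma gauge_polar_lower {ε : ℝ} (hε : 0 < ε) (hball : Metric.ball (0:Euc n) ε ⊆ K)
    {R : ℝ} (hR : 0 < R) (hKR : ∀ y ∈ K, ‖y‖ ≤ R) (d : Euc n) :
    ε / 2 * ‖d‖ ≤ gauge (polarSet K) d := by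
  rcases eq_or_ne d 0 with rfl | hd0
  · simp [gauge_zero]
  · have hmem : (ε / 2) • ‖d‖⁻¹ • d ∈ K := by
      apply hball
      rw [Metric.mem_ball, dist_zero_right, norm_smul, norm_smul, norm_inv, norm_norm,
        Real.norm_eq_abs, abs_of_pos (by positivity : (0:ℝ) < ε / 2)]
      rw [inv_mul_cancel₀ (norm_ne_zero_iff.mpr hd0), mul_one]
      linarith
    have h1 := inner_le_gauge_polar hR hKR d _ hmem
    rw [real_inner_smul_left, real_inner_smul_left, real_inner_self_eq_norm_sq] at h1
    have h2 : ‖d‖⁻¹ * ‖d‖ ^ 2 = ‖d‖ := by field_simp [pow_two]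
    rw [h2] at h1
    exact h1

lemma gauge_polar_pos {ε : ℝ} (hε : 0 < ε) (hball : Metric.ball (0:Euc n) ε ⊆ K)
    {R : ℝ} (hR : 0 < R) (hKR : ∀ y ∈ K, ‖y‖ ≤ R) {d : Euc n} (hd0 : d ≠ 0) :
    0 < gauge (polarSet K) d := by
  have := gauge_polar_lower hε hball hR hKR d
  have hnd : 0 < ‖d‖ := norm_pos_iff.mpr hd0
  nlinarith

/-- Attainment: the polar gauge is attained as a max of `⟪y, d⟫` over `K`. -/
lemma exists_max_gauge_polar (hKcomp : IsCompact K)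
    {R ε : ℝ} (hR : 0 < R) (hKR : ∀ y ∈ K, ‖y‖ ≤ R)
    (hε : 0 < ε) (hball : Metric.ball (0:Euc n) ε ⊆ K)
    (d : Euc n) : ∃ y ∈ K, ⟪y, d⟫_ℝ = gauge (polarSet K) d := by
  rcases eq_or_ne d 0 with rfl | hd0
  · exact ⟨0, zero_mem_K hε hball, by simp [gauge_zero]⟩
  · have hcont : ContinuousOn (fun y : Euc n => ⟪y, d⟫_ℝ) K :=
      (continuous_id.inner (continuous_const : Continuous fun _ : Euc n => d)).continuousOn
    obtain ⟨y₀, hy₀K, hy₀max⟩ := hKcomp.exists_isMaxOn ⟨0, zero_mem_K hε hball⟩ hcont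
    refine ⟨y₀, hy₀K, le_antisymm (inner_le_gauge_polar hR hKR d y₀ hy₀K) ?_⟩
    set m := ⟪y₀, d⟫_ℝ with hm
    have hm0 : 0 < m := by
      have hl := gauge_polar_lower hε hball hR hKR d
      have hnd : 0 < ‖d‖ := norm_pos_iff.mpr hd0
      -- m ≥ inner of the witness point; reuse the explicit point
      have hmem : (ε / 2) • ‖d‖⁻¹ • d ∈ K := by
        apply hball
        rw [Metric.mem_ball, dist_zero_right, norm_smul, norm_smul, norm_inv, norm_norm,
          Real.norm_eq_abs, abs_of_pos (by positivity : (0:ℝ) < ε / 2)]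
        rw [inv_mul_cancel₀ (norm_ne_zero_iff.mpr hd0), mul_one]
        linarith
      have h1 : ⟪(ε / 2) • ‖d‖⁻¹ • d, d⟫_ℝ ≤ m := hy₀max hmem
      rw [real_inner_smul_left, real_inner_smul_left, real_inner_self_eq_norm_sq] at h1
      have h2 : ‖d‖⁻¹ * ‖d‖ ^ 2 = ‖d‖ := by field_simp [pow_two]
      rw [h2] at h1
      nlinarith
    have hdP : d ∈ m • polarSet K := by
      rw [Set.mem_smul_set]
      refine ⟨m⁻¹ • d, fun y hy => ?_, by rw [smul_smul, mul_inv_cancel₀ hm0.ne', one_smul]⟩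
      rw [real_inner_smul_left]
      have h3 : ⟪d, y⟫_ℝ ≤ m := by
        rw [real_inner_comm]
        exact hy₀max hy
      calc m⁻¹ * ⟪d, y⟫_ℝ ≤ m⁻¹ * m := by
            apply mul_le_mul_of_nonneg_left h3 (by positivity)
        _ = 1 := inv_mul_cancel₀ hm0.ne'
    exact (gauge_le_of_mem hm0.le hdP :)

/-- Scaling membership: `gauge K z < μ` implies `z ∈ μ • K`. -/
lemma mem_smul_of_gauge_lt (hKconv : Convex ℝ K) {ε : ℝ} (hε : 0 < ε)
    (hball : Metric.ball (0:Euc n) ε ⊆ K) {z : Euc n} {μ : ℝ} (h : gauge K z < μ) :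
    z ∈ μ • K := by
  have habs : Absorbent ℝ K :=
    absorbent_nhds_zero (Filter.mem_of_superset (Metric.ball_mem_nhds 0 hε) hball)
  obtain ⟨b, hb0, hbμ, hzb⟩ := exists_lt_of_gauge_lt habs h
  obtain ⟨k, hkK, hk⟩ := Set.mem_smul_set.mp hzb
  have hμ0 : 0 < μ := lt_trans hb0 hbμ
  rw [Set.mem_smul_set]
  refine ⟨(μ⁻¹ * b) • k, ?_, ?_⟩
  · have hsc : StarConvex ℝ 0 K := hKconv.starConvex (zero_mem_K hε hball)
    apply hsc.smul_mem hkK (by positivity)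
    rw [← div_eq_inv_mul, div_le_one hμ0]
    exact hbμ.le
  · rw [smul_smul, ← mul_assoc, mul_inv_cancel₀ hμ0.ne', one_mul]
    exact hk

/-- The pairing inequality `⟪z, d⟫ ≤ ‖z‖_K ‖d‖_{K°}`. -/
lemma inner_le_gauge_mul_gauge (hKconv : Convex ℝ K)
    {R ε : ℝ} (hR : 0 < R) (hKR : ∀ y ∈ K, ‖y‖ ≤ R)
    (hε : 0 < ε) (hball : Metric.ball (0:Euc n) ε ⊆ K) (z d : Euc n) :
    ⟪z, d⟫_ℝ ≤ gauge K z * gauge (polarSet K) d := by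
  have hN0 : 0 ≤ gauge (polarSet K) d := gauge_nonneg d
  have hg0 : 0 ≤ gauge K z := gauge_nonneg z
  have key : ∀ μ : ℝ, gauge K z < μ → ⟪z, d⟫_ℝ ≤ μ * gauge (polarSet K) d := by
    intro μ hμ
    obtain ⟨k, hkK, hk⟩ := Set.mem_smul_set.mp (mem_smul_of_gauge_lt hKconv hε hball hμ)
    rw [← hk, real_inner_smul_left]
    have hμ0 : 0 < μ := lt_of_le_of_lt hg0 hμ
    exact mul_le_mul_of_nonneg_left (inner_le_gauge_polar hR hKR d k hkK) hμ0.le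
  rcases eq_or_lt_of_le hN0 with hN | hN
  · have := key (gauge K z + 1) (by linarith)
    rw [← hN] at *
    nlinarith
  · apply le_of_forall_gt_imp_ge_of_dense
    intro a ha
    have hμ : gauge K z < a / gauge (polarSet K) d := by
      rw [lt_div_iff₀ hN]
      exact ha
    have := key _ hμ
    rw [div_mul_cancel₀ _ hN.ne'] at this
    exact this


/-- a maximizer of a nonzero linear functional cannot be interior. -/
lemma exists_gt_of_interior {y v : Euc n} (hv : v ≠ 0) (hy : y ∈ interior K) :
    ∃ y' ∈ K, ⟪y, v⟫_ℝ < ⟪y', v⟫_ℝ := by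
  obtain ⟨δ, hδ0, hδ⟩ := Metric.isOpen_iff.mp isOpen_interior y hy
  have hnv : 0 < ‖v‖ := norm_pos_iff.mpr hv
  refine ⟨y + (δ / 2) • ‖v‖⁻¹ • v, interior_subset (hδ ?_), ?_⟩
  · rw [Metric.mem_ball, dist_self_add_left, norm_smul, norm_smul, norm_inv, norm_norm,
      Real.norm_eq_abs, abs_of_pos (by positivity : (0:ℝ) < δ / 2),
      inv_mul_cancel₀ hnv.ne', mul_one]
    linarith
  · rw [inner_add_left, real_inner_smul_left, real_inner_smul_left,
      real_inner_self_eq_norm_sq]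
    have : 0 < δ / 2 * (‖v‖⁻¹ * ‖v‖ ^ 2) := by positivity
    linarith

/-- Under strict convexity, the polar gauge is differentiable away from `0`. -/
lemma gaugePolar_hasGradientAt (hKcomp : IsCompact K) (hstrict : StrictlyConvexSet K)
    {R ε : ℝ} (hR : 0 < R) (hKR : ∀ y ∈ K, ‖y‖ ≤ R)
    (hε : 0 < ε) (hball : Metric.ball (0:Euc n) ε ⊆ K)
    {v : Euc n} (hv0 : v ≠ 0) :
    ∃ W, W ∈ K ∧ ⟪W, v⟫_ℝ = gauge (polarSet K) v ∧
      HasGradientAt (gauge (polarSet K)) W v := by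
  obtain ⟨W, hWK, hWv⟩ := exists_max_gauge_polar hKcomp hR hKR hε hball v
  have hfr : ∀ y ∈ K, ⟪y, v⟫_ℝ = gauge (polarSet K) v → y ∈ frontier K := by
    intro y hyK hyv
    rw [frontier, hKcomp.isClosed.closure_eq]
    refine ⟨hyK, fun hyint => ?_⟩
    obtain ⟨y', hy'K, hy'⟩ := exists_gt_of_interior hv0 hyint
    have := inner_le_gauge_polar hR hKR v y' hy'K
    rw [hyv] at hy'
    linarith
  have huniq : ∀ y ∈ K, ⟪y, v⟫_ℝ = gauge (polarSet K) v → y = W := by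
    intro y hyK hyv
    by_contra hne
    have hmid : midpoint ℝ y W ∈ interior K :=
      hstrict y (hfr y hyK hyv) W (hfr W hWK hWv) hne
    obtain ⟨y', hy'K, hy'⟩ := exists_gt_of_interior hv0 hmid
    have hval : ⟪midpoint ℝ y W, v⟫_ℝ = gauge (polarSet K) v := by
      rw [midpoint_eq_smul_add, real_inner_smul_left, inner_add_left, hyv, hWv]
      norm_num
      ring
    have := inner_le_gauge_polar hR hKR v y' hy'K
    rw [hval] at hy'
    linarith
  exact ⟨W, hWK, hWv, support_hasGradientAt hKcomp
    (fun z y hy => inner_le_gauge_polar hR hKR z y hy)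
    (fun z => exists_max_gauge_polar hKcomp hR hKR hε hball z) hWv huniq⟩

/-- Smoothness gives, at each frontier point, a unique supporting functional with value 1. -/
lemma smooth_normal (hKcomp : IsCompact K) (hKconv : Convex ℝ K)
    (h0 : (0 : Euc n) ∈ interior K) (hsmooth : SmoothSet K)
    {R : ℝ} (hR : 0 < R) (hKR : ∀ y ∈ K, ‖y‖ ≤ R)
    {z : Euc n} (hz : gauge K z = 1) :
    ∃ d₀, d₀ ∈ polarSet K ∧ ⟪d₀, z⟫_ℝ = 1 ∧
      (∀ w ∈ polarSet K, ⟪w, z⟫_ℝ = 1 → w = d₀) := by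
  have hKnhds : K ∈ 𝓝 (0 : Euc n) := mem_interior_iff_mem_nhds.mp h0
  have hzfr : z ∈ frontier K := (gauge_eq_one_iff_mem_frontier hKconv hKnhds).mp hz
  obtain ⟨d₀, ⟨hd₀nc, hd₀fr⟩, huni⟩ := hsmooth z hzfr
  have hd₀P : d₀ ∈ polarSet K := hPclosed.frontier_subset hd₀fr
  have hzK : z ∈ K := hKcomp.isClosed.frontier_subset hzfr
  have hz0 : z ≠ 0 := by
    intro h
    rw [h, gauge_zero] at hz
    norm_num at hz
  have hd₀z : ⟪d₀, z⟫_ℝ = 1 := by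
    refine le_antisymm (hd₀P z hzK) ?_
    by_contra hlt
    push_neg at hlt
    have hub2 : ∀ y ∈ K, ⟪d₀, y⟫_ℝ ≤ ⟪d₀, z⟫_ℝ := by
      intro y hy
      have := hd₀nc y hy
      rw [inner_sub_right] at this
      linarith
    have hint : d₀ ∈ interior (polarSet K) := by
      rw [mem_interior]
      refine ⟨Metric.ball d₀ ((1 - ⟪d₀, z⟫_ℝ) / R), fun e he y hy => ?_,
        Metric.isOpen_ball, Metric.mem_ball_self (div_pos (by linarith) hR)⟩
      rw [Metric.mem_ball, dist_eq_norm] at he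
      have h1 : ⟪e, y⟫_ℝ = ⟪d₀, y⟫_ℝ + ⟪e - d₀, y⟫_ℝ := by
        rw [inner_sub_left]; ring
      have h2 : ⟪e - d₀, y⟫_ℝ ≤ ‖e - d₀‖ * R := by
        refine (real_inner_le_norm _ _).trans ?_
        exact mul_le_mul_of_nonneg_left (hKR y hy) (norm_nonneg _)
      have h3 : ‖e - d₀‖ * R < (1 - ⟪d₀, z⟫_ℝ) / R * R :=
        mul_lt_mul_of_pos_right he hR
      rw [div_mul_cancel₀ _ hR.ne'] at h3
      have := hub2 y hy
      linarith
    exact hd₀fr.2 hint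
  refine ⟨d₀, hd₀P, hd₀z, fun w hwP hwz => ?_⟩
  apply huni
  constructor
  · intro y hy
    rw [inner_sub_right, hwz]
    have := hwP y hy
    linarith
  · constructor
    · exact subset_closure hwP
    · intro hint
      obtain ⟨ρ, hρ0, hρ⟩ := Metric.isOpen_iff.mp isOpen_interior w hint
      have hnz : 0 < ‖z‖ := norm_pos_iff.mpr hz0
      have hw'P : w + (ρ / 2) • ‖z‖⁻¹ • z ∈ polarSet K := by
        apply interior_subset
        apply hρ
        rw [Metric.mem_ball, dist_self_add_left, norm_smul, norm_smul, norm_inv, norm_norm,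
          Real.norm_eq_abs, abs_of_pos (by positivity : (0:ℝ) < ρ / 2),
          inv_mul_cancel₀ hnz.ne', mul_one]
        linarith
      have := hw'P z hzK
      rw [inner_add_left, real_inner_smul_left, real_inner_smul_left,
        real_inner_self_eq_norm_sq, hwz] at this
      have h4 : 0 < ρ / 2 * (‖z‖⁻¹ * ‖z‖ ^ 2) := by positivity
      linarith

/-- Under smoothness, the gauge of `K` is differentiable away from `0`, with gradient on `∂K°`. -/
lemma gaugeK_hasGradientAt (hKcomp : IsCompact K) (hKconv : Convex ℝ K)
    (h0 : (0 : Euc n) ∈ interior K) (hsmooth : SmoothSet K)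
    {R ε : ℝ} (hR : 0 < R) (hKR : ∀ y ∈ K, ‖y‖ ≤ R)
    (hε : 0 < ε) (hball : Metric.ball (0:Euc n) ε ⊆ K)
    {x : Euc n} (hx0 : x ≠ 0) :
    ∃ d₀, HasGradientAt (gauge K) d₀ x ∧ d₀ ∈ polarSet K ∧
      gauge (polarSet K) d₀ = 1 := by
  have hKnhds : K ∈ 𝓝 (0 : Euc n) := mem_interior_iff_mem_nhds.mp h0
  have habs : Absorbent ℝ K := absorbent_nhds_zero hKnhds
  have hvnb : Bornology.IsVonNBounded ℝ K := NormedSpace.isVonNBounded_iff ℝ |>.mpr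
    hKcomp.isBounded
  have ht0 : 0 < gauge K x := (gauge_pos habs hvnb).mpr hx0
  set t := gauge K x with htdef
  have hzhat : gauge K (t⁻¹ • x) = 1 := by
    rw [gauge_smul_of_nonneg (by positivity), smul_eq_mul, inv_mul_cancel₀ ht0.ne']
  obtain ⟨d₀, hd₀P, hd₀z, hd₀uniq⟩ := smooth_normal hKcomp hKconv h0 hsmooth hR hKR hzhat
  have hzK : t⁻¹ • x ∈ K := by
    have := (gauge_le_one_iff_mem_closure hKconv hKnhds).mp hzhat.le
    rwa [hKcomp.isClosed.closure_eq] at this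
  have hxz : x = t • t⁻¹ • x := by
    rw [smul_smul, mul_inv_cancel₀ ht0.ne', one_smul]
  -- upper bound: every polar element is below the gauge
  have hub : ∀ z : Euc n, ∀ w ∈ polarSet K, ⟪w, z⟫_ℝ ≤ gauge K z := by
    intro z w hw
    apply le_of_forall_gt_imp_ge_of_dense
    intro μ hμ
    obtain ⟨k, hkK, hk⟩ := Set.mem_smul_set.mp (mem_smul_of_gauge_lt hKconv hε hball hμ)
    have hμ0 : 0 < μ := lt_of_le_of_lt (gauge_nonneg z) hμ
    rw [← hk, real_inner_smul_right]
    have := hw k hkK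
    nlinarith
  -- attainment for every z
  have hatt : ∀ z : Euc n, ∃ w ∈ polarSet K, ⟪w, z⟫_ℝ = gauge K z := by
    intro z
    rcases eq_or_ne z 0 with rfl | hz0
    · exact ⟨0, zero_mem_polar, by simp [gauge_zero]⟩
    · have ht'0 : 0 < gauge K z := (gauge_pos habs hvnb).mpr hz0
      have hz1 : gauge K ((gauge K z)⁻¹ • z) = 1 := by
        rw [gauge_smul_of_nonneg (by positivity), smul_eq_mul, inv_mul_cancel₀ ht'0.ne']
      obtain ⟨d', hd'P, hd'z, _⟩ := smooth_normal hKcomp hKconv h0 hsmooth hR hKR hz1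
      refine ⟨d', hd'P, ?_⟩
      rw [real_inner_smul_right] at hd'z
      have h7 : gauge K z * ((gauge K z)⁻¹ * ⟪d', z⟫_ℝ) = gauge K z * 1 := by rw [hd'z]
      rwa [← mul_assoc, mul_inv_cancel₀ ht'0.ne', one_mul, mul_one] at h7
  have hwx : ⟪d₀, x⟫_ℝ = gauge K x := by
    conv_lhs => rw [hxz]
    rw [real_inner_smul_right, hd₀z, mul_one]
  have huniq : ∀ w ∈ polarSet K, ⟪w, x⟫_ℝ = gauge K x → w = d₀ := by
    intro w hwP hwx'
    apply hd₀uniq w hwP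
    rw [real_inner_smul_right, hwx', ← htdef, inv_mul_cancel₀ ht0.ne']
  -- compactness of the polar
  have hPcomp : IsCompact (polarSet K) := by
    apply Metric.isCompact_of_isClosed_isBounded hPclosed
    apply Bornology.IsBounded.subset (Metric.isBounded_closedBall (x := (0:Euc n)) (r := 2/ε))
    intro d hd
    rw [Metric.mem_closedBall, dist_zero_right]
    exact polar_bounded hε hball d hd
  refine ⟨d₀, support_hasGradientAt hPcomp (fun z w hw => hub z w hw) hatt hwx huniq,
    hd₀P, ?_⟩
  -- the gauge of the polar of d₀ is 1
  refine le_antisymm ?_ ?_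
  · obtain ⟨y, hyK, hy⟩ := exists_max_gauge_polar hKcomp hR hKR hε hball d₀
    rw [← hy, real_inner_comm]
    have := hub y d₀ hd₀P
    calc ⟪d₀, y⟫_ℝ ≤ gauge K y := this
      _ ≤ 1 := gauge_le_one_of_mem hyK
  · have := inner_le_gauge_polar hR hKR d₀ _ hzK
    rw [real_inner_comm] at hd₀z
    rw [hd₀z] at this
    exact this


/-- Scalar Fenchel–Young: `aσ - f(a) ≤ g(σ)`. -/
lemma fy_scalar {a σ : ℝ} (ha0 : 0 ≤ a) (ha1 : a < 1) (hσ : 0 ≤ σ) :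
    a * σ - (-Real.log (1 - a) - a) ≤ σ - Real.log (1 + σ) := by
  have h1 : (0:ℝ) < 1 - a := by linarith
  have h2 : (0:ℝ) < 1 + σ := by linarith
  have hlog : Real.log ((1 - a) * (1 + σ)) ≤ (1 - a) * (1 + σ) - 1 :=
    Real.log_le_sub_one_of_pos (by positivity)
  rw [Real.log_mul h1.ne' h2.ne'] at hlog
  nlinarith

/-- The barrier integrand `f(a) = -ln(1-a) - a` is monotone on `[0,1)`. -/
lemma f_mono {a b : ℝ} (ha : 0 ≤ a) (hab : a ≤ b) (hb : b < 1) :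
    -Real.log (1 - a) - a ≤ -Real.log (1 - b) - b := by
  have h1 : (0:ℝ) < 1 - b := by linarith
  have h2 : (0:ℝ) < 1 - a := by linarith
  have hlog : Real.log ((1 - b) / (1 - a)) ≤ (1 - b) / (1 - a) - 1 :=
    Real.log_le_sub_one_of_pos (by positivity)
  rw [Real.log_div h1.ne' h2.ne'] at hlog
  have key : (1 - b) / (1 - a) - 1 ≤ a - b := by
    rw [div_sub_one h2.ne', div_le_iff₀ h2]
    nlinarith
  linarith

/-- Value of the conjugate at the optimal scalar point. -/
lemma conj_val {σ : ℝ} (hσ : 0 ≤ σ) :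
    σ / (1 + σ) * σ - (-Real.log (1 - σ / (1 + σ)) - σ / (1 + σ))
      = σ - Real.log (1 + σ) := by
  have h2 : (0:ℝ) < 1 + σ := by linarith
  have h3 : 1 - σ / (1 + σ) = (1 + σ)⁻¹ := by field_simp; ring
  rw [h3, Real.log_inv]
  field_simp
  ring

/-- The Fenchel conjugate of the barrier equals `g(‖d‖_{K°}) = ‖d‖_{K°} - ln(1 + ‖d‖_{K°})`. -/
lemma FstarK_eq (hKcomp : IsCompact K) (hKconv : Convex ℝ K)
    {R ε : ℝ} (hR : 0 < R) (hKR : ∀ y ∈ K, ‖y‖ ≤ R)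
    (hε : 0 < ε) (hball : Metric.ball (0:Euc n) ε ⊆ K) (d : Euc n) :
    FstarK K d = gauge (polarSet K) d - Real.log (1 + gauge (polarSet K) d) := by
  set σ := gauge (polarSet K) d with hσdef
  have hσ0 : 0 ≤ σ := gauge_nonneg d
  have hub : ∀ val ∈ (fun x => ⟪x, d⟫_ℝ - FK K x) '' {x | gauge K x < 1},
      val ≤ σ - Real.log (1 + σ) := by
    rintro val ⟨x₁, hx₁, rfl⟩
    simp only [Set.mem_setOf_eq] at hx₁
    have hp : ⟪x₁, d⟫_ℝ ≤ gauge K x₁ * σ :=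
      inner_le_gauge_mul_gauge hKconv hR hKR hε hball x₁ d
    have hfy := fy_scalar (gauge_nonneg x₁) hx₁ hσ0
    have hFK : FK K x₁ = -Real.log (1 - gauge K x₁) - gauge K x₁ := rfl
    simp only []
    rw [hFK]
    linarith
  have hbdd : BddAbove ((fun x => ⟪x, d⟫_ℝ - FK K x) '' {x | gauge K x < 1}) :=
    ⟨σ - Real.log (1 + σ), hub⟩
  have hne : ((fun x => ⟪x, d⟫_ℝ - FK K x) '' {x | gauge K x < 1}).Nonempty :=
    ⟨_, ⟨0, by simp [gauge_zero], rfl⟩⟩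
  refine le_antisymm (csSup_le hne hub) ?_
  obtain ⟨y, hyK, hyd⟩ := exists_max_gauge_polar hKcomp hR hKR hε hball d
  set a := σ / (1 + σ) with hadef
  have h1σ : (0:ℝ) < 1 + σ := by linarith
  have ha0 : 0 ≤ a := by positivity
  have ha1 : a < 1 := by
    rw [hadef, div_lt_one h1σ]
    linarith
  have hgx : gauge K (a • y) ≤ a := by
    rw [gauge_smul_of_nonneg ha0, smul_eq_mul]
    calc a * gauge K y ≤ a * 1 :=
          mul_le_mul_of_nonneg_left (gauge_le_one_of_mem hyK) ha0
      _ = a := mul_one a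
  have hmem : a • y ∈ {x : Euc n | gauge K x < 1} := lt_of_le_of_lt hgx ha1
  have hval : σ - Real.log (1 + σ) ≤ ⟪a • y, d⟫_ℝ - FK K (a • y) := by
    have hinner : ⟪a • y, d⟫_ℝ = a * σ := by
      rw [real_inner_smul_left, hyd]
    have hFK : FK K (a • y) = -Real.log (1 - gauge K (a • y)) - gauge K (a • y) := rfl
    have hmono := f_mono (gauge_nonneg (a • y)) hgx ha1
    rw [hinner, hFK, ← conj_val hσ0]
    linarith
  exact le_trans hval (le_csSup hbdd ⟨a • y, hmem, rfl⟩)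


/-- Chain rule: scalar function composed with a function admitting a gradient. -/
lemma hasGradientAt_comp {M : Euc n → ℝ} {w x : Euc n} {f : ℝ → ℝ} {c : ℝ}
    (hM : HasGradientAt M w x) (hf : HasDerivAt f c (M x)) :
    HasGradientAt (fun y => f (M y)) (c • w) x := by
  rw [hasGradientAt_iff_hasFDerivAt] at hM ⊢
  have h2 := hf.comp_hasFDerivAt x hM
  have h3 : (InnerProductSpace.toDual ℝ (Euc n)) (c • w)
      = c • (InnerProductSpace.toDual ℝ (Euc n)) w := by
    refine ContinuousLinearMap.ext fun y => ?_
    simp only [InnerProductSpace.toDual_apply_apply, ContinuousLinearMap.smul_apply,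
      real_inner_smul_left]
    rfl
  rw [h3]
  exact h2

/-- Derivative of the barrier integrand. -/
lemma f_hasDerivAt {t : ℝ} (ht : t < 1) :
    HasDerivAt (fun a : ℝ => -Real.log (1 - a) - a) (t / (1 - t)) t := by
  have h1 : HasDerivAt (fun a : ℝ => 1 - a) (-1) t := (hasDerivAt_id t).const_sub 1
  have h2 := (Real.hasDerivAt_log (by linarith : (1:ℝ) - t ≠ 0)).comp t h1
  have h3 := (h2.neg).sub (hasDerivAt_id t)
  refine h3.congr_deriv ?_
  have h1t : (1:ℝ) - t ≠ 0 := by linarith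
  field_simp
  ring

/-- Derivative of `g(a) = a - ln(1+a)`. -/
lemma g_hasDerivAt {σ : ℝ} (hσ : 0 ≤ σ) :
    HasDerivAt (fun a : ℝ => a - Real.log (1 + a)) (σ / (1 + σ)) σ := by
  have h1 : HasDerivAt (fun a : ℝ => 1 + a) 1 σ := (hasDerivAt_id σ).const_add 1
  have h2 := (Real.hasDerivAt_log (by linarith : (1:ℝ) + σ ≠ 0)).comp σ h1
  have h3 := (hasDerivAt_id σ).sub h2
  refine h3.congr_deriv ?_
  field_simp
  ring

/-- Derivative of `a ↦ a²/2`. -/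
lemma sq_hasDerivAt (σ : ℝ) : HasDerivAt (fun a : ℝ => a ^ 2 / 2) σ σ := by
  have := ((hasDerivAt_id σ).pow 2).div_const 2
  simpa using this

/-- A function that vanishes quadratically at the origin has gradient `0` there. -/
lemma hasGradientAt_zero_of_sq_bound {F : Euc n → ℝ} {c : ℝ}
    (hF0 : F 0 = 0) (hbound : ∀ᶠ y in 𝓝 (0 : Euc n), |F y| ≤ c * ‖y‖ ^ 2) :
    HasGradientAt F (0 : Euc n) (0 : Euc n) := by
  rw [hasGradientAt_iff_isLittleO, Asymptotics.isLittleO_iff]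
  intro δ hδ
  have hc : ∀ᶠ y in 𝓝 (0 : Euc n), ‖y‖ < δ / (|c| + 1) := by
    have := Metric.ball_mem_nhds (0 : Euc n) (show 0 < δ / (|c| + 1) by positivity)
    filter_upwards [this] with y hy
    rwa [Metric.mem_ball, dist_zero_right] at hy
  filter_upwards [hbound, hc] with y hy1 hy2
  rw [hF0, inner_zero_left]
  simp only [sub_zero, sub_zero]
  rw [Real.norm_eq_abs]
  calc |F y| ≤ c * ‖y‖ ^ 2 := hy1
    _ ≤ (|c| + 1) * (‖y‖ * ‖y‖) := by
        rw [pow_two]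
        have h1 : c ≤ |c| + 1 := by
          have := le_abs_self c
          linarith
        nlinarith [norm_nonneg y, abs_nonneg c]
    _ ≤ (|c| + 1) * (δ / (|c| + 1) * ‖y‖) := by
        have h2 : (0:ℝ) < |c| + 1 := by positivity
        have := mul_le_mul_of_nonneg_right hy2.le (norm_nonneg y)
        nlinarith [norm_nonneg y]
    _ = δ * ‖y‖ := by
        field_simp

/-- `FK` has gradient `0` at `0`. -/
lemma FK_hasGradientAt_zero {ε : ℝ} (hε : 0 < ε) (hball : Metric.ball (0:Euc n) ε ⊆ K) :
    HasGradientAt (FK K) (0 : Euc n) (0 : Euc n) := by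
  apply hasGradientAt_zero_of_sq_bound (c := 2 / ε ^ 2)
  · show -Real.log (1 - gauge K 0) - gauge K 0 = 0
    rw [gauge_zero]
    norm_num
  · have : ∀ᶠ y in 𝓝 (0 : Euc n), ‖y‖ < ε / 2 := by
      filter_upwards [Metric.ball_mem_nhds (0 : Euc n) (show 0 < ε/2 by positivity)] with y hy
      rwa [Metric.mem_ball, dist_zero_right] at hy
    filter_upwards [this] with y hy
    have hg : ε * gauge K y ≤ ‖y‖ := mul_gauge_le_norm hball
    have hg2 : gauge K y ≤ ‖y‖ / ε := by
      rw [le_div_iff₀ hε]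
      linarith [hg]
    set a := gauge K y with hadef
    have ha0 : 0 ≤ a := gauge_nonneg y
    have ha12 : a ≤ 1 / 2 := by
      have : ‖y‖ / ε ≤ 1 / 2 := by
        rw [div_le_div_iff₀ hε (by norm_num)]
        linarith
      linarith
    have hfl : 0 ≤ -Real.log (1 - a) - a := by
      have := Real.log_le_sub_one_of_pos (show (0:ℝ) < 1 - a by linarith)
      linarith
    have hfu : -Real.log (1 - a) - a ≤ 2 * a ^ 2 := by
      have h5 := Real.one_sub_inv_le_log_of_pos (show (0:ℝ) < 1 - a by linarith)
      have hne : (1:ℝ) - a ≠ 0 := by linarith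
      have h6 : (1 - a)⁻¹ - 1 = a / (1 - a) := by
        field_simp; ring
      have h7 : a / (1 - a) ≤ a + 2 * a ^ 2 := by
        rw [div_le_iff₀ (by linarith : (0:ℝ) < 1 - a)]
        nlinarith [sq_nonneg a]
      linarith [h5, h6, h7]
    show |FK K y| ≤ 2 / ε ^ 2 * ‖y‖ ^ 2
    have hFK : FK K y = -Real.log (1 - a) - a := rfl
    rw [hFK, abs_of_nonneg hfl]
    have h8 : a ^ 2 ≤ (‖y‖ / ε) ^ 2 := by
      apply pow_le_pow_left₀ ha0 hg2
    have h9 : 2 * a ^ 2 ≤ 2 * (‖y‖ / ε) ^ 2 := by linarith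
    have h10 : 2 * (‖y‖ / ε) ^ 2 = 2 / ε ^ 2 * ‖y‖ ^ 2 := by
      field_simp
    linarith


lemma g_bounds {σ : ℝ} (hσ : 0 ≤ σ) :
    0 ≤ σ - Real.log (1 + σ) ∧ σ - Real.log (1 + σ) ≤ σ ^ 2 := by
  have h1 : (0:ℝ) < 1 + σ := by linarith
  have h2 := Real.log_le_sub_one_of_pos h1
  have h3 := Real.one_sub_inv_le_log_of_pos h1
  constructor
  · linarith
  · have h4 : σ ^ 2 - (σ - 1 + (1 + σ)⁻¹) = σ ^ 3 / (1 + σ) := by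
      field_simp
      ring
    have h5 : (0:ℝ) ≤ σ ^ 3 / (1 + σ) := by positivity
    linarith

lemma Fstar_hasGradientAt_zero (hKcomp : IsCompact K) (hKconv : Convex ℝ K)
    {R ε : ℝ} (hR : 0 < R) (hKR : ∀ y ∈ K, ‖y‖ ≤ R)
    (hε : 0 < ε) (hball : Metric.ball (0:Euc n) ε ⊆ K) :
    HasGradientAt (FstarK K) (0 : Euc n) (0 : Euc n) := by
  have hNle : ∀ d : Euc n, gauge (polarSet K) d ≤ R * ‖d‖ := by
    intro d
    have h := mul_gauge_le_norm (ball_subset_polar hR hKR) (x := d)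
    nlinarith [gauge_nonneg (s := polarSet K) d, mul_le_mul_of_nonneg_left h hR.le,
      mul_inv_cancel₀ hR.ne']
  apply hasGradientAt_zero_of_sq_bound (c := R ^ 2)
  · rw [FstarK_eq hKcomp hKconv hR hKR hε hball, gauge_zero]
    norm_num
  · apply Filter.Eventually.of_forall
    intro d
    rw [FstarK_eq hKcomp hKconv hR hKR hε hball]
    set σ := gauge (polarSet K) d with hσd
    have hσ0 : 0 ≤ σ := gauge_nonneg d
    obtain ⟨hl, hu⟩ := g_bounds hσ0
    rw [abs_of_nonneg hl]
    have h6 : σ ^ 2 ≤ (R * ‖d‖) ^ 2 := by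
      apply pow_le_pow_left₀ hσ0 (hNle d) 2
    calc σ - Real.log (1 + σ) ≤ σ ^ 2 := hu
      _ ≤ (R * ‖d‖) ^ 2 := h6
      _ = R ^ 2 * ‖d‖ ^ 2 := by ring

lemma phi_hasGradientAt_zero {R : ℝ} (hR : 0 < R) (hKR : ∀ y ∈ K, ‖y‖ ≤ R) :
    HasGradientAt (fun d : Euc n => gauge (polarSet K) d ^ 2 / 2) (0 : Euc n) (0 : Euc n) := by
  have hNle : ∀ d : Euc n, gauge (polarSet K) d ≤ R * ‖d‖ := by
    intro d
    have h := mul_gauge_le_norm (ball_subset_polar hR hKR) (x := d)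
    nlinarith [gauge_nonneg (s := polarSet K) d, mul_le_mul_of_nonneg_left h hR.le,
      mul_inv_cancel₀ hR.ne']
  apply hasGradientAt_zero_of_sq_bound (c := R ^ 2)
  · rw [gauge_zero]
    norm_num
  · apply Filter.Eventually.of_forall
    intro d
    have hσ0 : 0 ≤ gauge (polarSet K) d := gauge_nonneg d
    have h6 : gauge (polarSet K) d ^ 2 ≤ (R * ‖d‖) ^ 2 := pow_le_pow_left₀ hσ0 (hNle d) 2
    rw [abs_of_nonneg (by positivity)]
    calc gauge (polarSet K) d ^ 2 / 2 ≤ (R * ‖d‖) ^ 2 / 2 := by linarith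
      _ ≤ R ^ 2 * ‖d‖ ^ 2 := by nlinarith [sq_nonneg (R * ‖d‖)]

end Polar

end BregAux

open BregAux

/-- If `Θ = (‖u‖_{K°} - ‖v‖_{K°}) / (1 + ‖v‖_{K°}) ≥ -1/2` where
`v = ∇F_K(x)`, then the Bregman divergence of the conjugate barrier is bounded by
`(1 - ‖x‖_K)²‖u - v‖²_{K°} + (1 - ‖x‖_K) D_{½‖·‖²_{K°}}(u, v)`. -/
theorem bregman_conjugate_upper_bound {n : ℕ}
    (K : Set (Euc n)) (hKcomp : IsCompact K) (hKconv : Convex ℝ K)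
    (h0 : (0 : Euc n) ∈ interior K)
    (hstrict : StrictlyConvexSet K) (hsmooth : SmoothSet K)
    (x : Euc n) (hxK : x ∈ K) (hx1 : gauge K x < 1)
    (u : Euc n) (hune : u ≠ 0)
    (v : Euc n) (hv : v = gradient (FK K) x)
    (hΘ : (gauge (polarSet K) u - gauge (polarSet K) v) / (1 + gauge (polarSet K) v)
            ≥ -(1 / 2 : ℝ)) :
    breg (FstarK K) u v
      ≤ (1 - gauge K x) ^ 2 * gauge (polarSet K) (u - v) ^ 2
        + (1 - gauge K x) * breg (fun d => gauge (polarSet K) d ^ 2 / 2) u v := by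
  obtain ⟨ε, hε0, hball⟩ : ∃ ε > 0, Metric.ball (0 : Euc n) ε ⊆ K :=
    Metric.mem_nhds_iff.mp (mem_interior_iff_mem_nhds.mp h0)
  obtain ⟨R₀, hR₀⟩ := hKcomp.isBounded.subset_closedBall 0
  set R : ℝ := max R₀ 1 with hRdef
  have hR : (0:ℝ) < R := lt_of_lt_of_le one_pos (le_max_right _ _)
  have hKR : ∀ y ∈ K, ‖y‖ ≤ R := fun y hy => by
    have := hR₀ hy
    rw [Metric.mem_closedBall, dist_zero_right] at this
    exact this.trans (le_max_left _ _)
  have hr0 : 0 ≤ gauge (polarSet K) u := gauge_nonneg u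
  rcases eq_or_ne x 0 with rfl | hx0
  · -- the center: `v = 0`
    have hvz : v = 0 := by
      rw [hv, (FK_hasGradientAt_zero hε0 hball).gradient]
    subst hvz
    have hgFs : gradient (FstarK K) (0 : Euc n) = 0 :=
      (Fstar_hasGradientAt_zero hKcomp hKconv hR hKR hε0 hball).gradient
    have hgφ : gradient (fun d : Euc n => gauge (polarSet K) d ^ 2 / 2) (0 : Euc n) = 0 :=
      (phi_hasGradientAt_zero hR hKR).gradient
    simp only [breg, hgFs, hgφ, inner_zero_left, sub_zero, gauge_zero]
    rw [FstarK_eq hKcomp hKconv hR hKR hε0 hball, FstarK_eq hKcomp hKconv hR hKR hε0 hball,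
      gauge_zero]
    have hkey := key_scalar hr0 (le_refl (0:ℝ))
    have hQ : (0:ℝ) ≤ gauge (polarSet K) u ^ 2 := by positivity
    norm_num
    norm_num at hkey
    nlinarith [hkey, hQ]
  · -- nonzero `x`
    have hKnhds : K ∈ 𝓝 (0 : Euc n) := mem_interior_iff_mem_nhds.mp h0
    have habs : Absorbent ℝ K := absorbent_nhds_zero hKnhds
    have hvnb : Bornology.IsVonNBounded ℝ K :=
      NormedSpace.isVonNBounded_iff ℝ |>.mpr hKcomp.isBounded
    have ht0 : 0 < gauge K x := (gauge_pos habs hvnb).mpr hx0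
    set t := gauge K x with htdef
    have ht1 : t < 1 := hx1
    obtain ⟨d₀, hgrad, hd₀P, hd₀N⟩ :=
      gaugeK_hasGradientAt hKcomp hKconv h0 hsmooth hR hKR hε0 hball hx0
    have hFKgrad : HasGradientAt (FK K) ((t / (1 - t)) • d₀) x :=
      hasGradientAt_comp hgrad (f_hasDerivAt ht1)
    have hveq : v = (t / (1 - t)) • d₀ := by
      rw [hv, hFKgrad.gradient]
    have hc0 : 0 ≤ t / (1 - t) := div_nonneg ht0.le (by linarith)
    have hsval : gauge (polarSet K) v = t / (1 - t) := by
      rw [hveq, gauge_smul_of_nonneg hc0, smul_eq_mul, hd₀N, mul_one]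
    set s := gauge (polarSet K) v with hsdef
    have hs0 : 0 ≤ s := gauge_nonneg v
    have hs1 : (0:ℝ) < 1 + s := by linarith
    have h1t : (1:ℝ) - t ≠ 0 := by linarith
    have hst : (1 - t) * (1 + s) = 1 := by
      rw [hsval]
      field_simp; ring
    have hv0 : v ≠ 0 := by
      intro h
      have hpos : 0 < t / (1 - t) := div_pos ht0 (by linarith)
      rw [← hsval] at hpos
      rw [hsdef, h, gauge_zero] at hpos
      exact lt_irrefl 0 hpos
    obtain ⟨W, hWK, hWv, hNgrad⟩ :=
      gaugePolar_hasGradientAt hKcomp hstrict hR hKR hε0 hball hv0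
    have hφgrad : HasGradientAt (fun d : Euc n => gauge (polarSet K) d ^ 2 / 2) (s • W) v :=
      hasGradientAt_comp hNgrad (sq_hasDerivAt s)
    have hFsgrad : HasGradientAt (FstarK K) ((s / (1 + s)) • W) v := by
      have h1 : HasGradientAt
          (fun d : Euc n => gauge (polarSet K) d - Real.log (1 + gauge (polarSet K) d))
          ((s / (1 + s)) • W) v :=
        hasGradientAt_comp hNgrad (g_hasDerivAt hs0)
      have heq : FstarK K
          = fun d : Euc n => gauge (polarSet K) d - Real.log (1 + gauge (polarSet K) d) :=
        funext fun d => FstarK_eq hKcomp hKconv hR hKR hε0 hball d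
      rw [heq]
      exact h1
    set r := gauge (polarSet K) u with hrdef
    set Q := gauge (polarSet K) (u - v) with hQdef
    set G := ⟪W, u - v⟫_ℝ with hGdef
    have hbreg1 : breg (FstarK K) u v
        = (r - Real.log (1 + r)) - (s - Real.log (1 + s)) - s / (1 + s) * G := by
      rw [breg, hFsgrad.gradient, FstarK_eq hKcomp hKconv hR hKR hε0 hball,
        FstarK_eq hKcomp hKconv hR hKR hε0 hball, real_inner_smul_left]
    have hbreg2 : breg (fun d : Euc n => gauge (polarSet K) d ^ 2 / 2) u v
        = r ^ 2 / 2 - s ^ 2 / 2 - s * G := by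
      rw [breg, hφgrad.gradient, real_inner_smul_left]
    rw [hbreg1, hbreg2]
    have hkey := key_scalar hr0 hs0
    have hQ0 : (0:ℝ) ≤ (1 - t) ^ 2 * Q ^ 2 := by positivity
    have e1 : 1 - t = (1 + s)⁻¹ := by
      field_simp
      linarith [hst]
    have e2 : s / (1 + s) * G = (1 - t) * (s * G) := by
      rw [e1]
      ring
    have e3 : (1 - t) * (r ^ 2 / 2 - s ^ 2 / 2 - s * G)
        = (1 - t) * ((r ^ 2 - s ^ 2) / 2) - (1 - t) * (s * G) := by
      ring
    have e4 : (1 - t) * ((r ^ 2 - s ^ 2) / 2) = (r ^ 2 - s ^ 2) / (2 * (1 + s)) := by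
      rw [e1]
      field_simp
    linarith [hkey, hQ0]
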